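/- Approximation error of exact-value Lagrange interpolation: if g* ∈ Σ(λ, α) with α > 1 and P_{q̃}(x̃) = Σ_{ã: M^{−1}ã ∈ I_{q̃}} g*(M^{−1}ã)Q_{q̃,ã}(x̃), then for all x̃ ∈ I_{q̃}, |P_{q̃}(x̃) − g*(x̃)| ≤ 2⌈α⌉^{d⌈α⌉} λ M^{−α}. -/

import Mathlib

open Finset

/-- The largest integer strictly smaller than `α` (for `α > 0`). -/
noncomputable def flr (α : ℝ) : ℕ := (⌈α⌉ - 1).toNat

/-- `g` belongs to the Hölder class `Σ(λ, α)` on `[0,1]^m`, with `TP y k` the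
degree-`k` Taylor polynomial of `g` at `y`. -/
def MemHolderSigma (m : ℕ) (lam α : ℝ) (g : (Fin m → ℝ) → ℝ)
    (TP : (Fin m → ℝ) → ℕ → (Fin m → ℝ) → ℝ) : Prop :=
  ContDiff ℝ (flr α : ℕ∞) g ∧
  ∀ x y : Fin m → ℝ,
    (∀ i, x i ∈ Set.Icc (0:ℝ) 1) → (∀ i, y i ∈ Set.Icc (0:ℝ) 1) →
    ∀ β : ℝ, 0 < β → β ≤ α →
      |g x - TP y (flr β) x| ≤ lam * ‖x - y‖ ^ β

/-- The tensor-product Lagrange basis polynomial `Q_{q̃,ã}`. -/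
noncomputable def lagQ (m k M : ℕ) (qt aa : Fin m → ℕ) (x : Fin m → ℝ) : ℝ :=
  ∏ i : Fin m, ∏ j ∈ (Finset.range (k + 1)).filter (fun j => j ≠ aa i - k * qt i),
    (x i - ((k * qt i + j : ℕ) : ℝ) / M) /
      ((aa i : ℝ) / M - ((k * qt i + j : ℕ) : ℝ) / M)

/-- Approximation error of exact-value tensor-product Lagrange interpolation of a
function `g* ∈ Σ(λ, α)` on the cell `I_{q̃}`:
`|P_{q̃}(x̃) − g*(x̃)| ≤ 2⌈α⌉^{d⌈α⌉} λ M^{−α}`.  The hypothesis `hrepro` records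
that the Lagrange interpolation reproduces polynomials of degree `⌊α⌋`, in
particular the Taylor polynomial of `g*` at the cell corner. -/
theorem lagrange_approximation_error (d l M : ℕ) (hd : 2 ≤ d) (α lam : ℝ)
    (hα : 1 < α) (hlam : 1 ≤ lam) (hM : M = flr α * 2 ^ l)
    (qt : Fin (d - 1) → ℕ) (hqt : ∀ i, qt i ≤ 2 ^ l - 1)
    (gstar : (Fin (d - 1) → ℝ) → ℝ)
    (TP : (Fin (d - 1) → ℝ) → ℕ → (Fin (d - 1) → ℝ) → ℝ)
    (hg : MemHolderSigma (d - 1) lam α gstar TP)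
    (hrepro : ∀ x : Fin (d - 1) → ℝ,
      (∀ i, x i ∈ Set.Icc (((flr α * qt i : ℕ) : ℝ) / M)
          (((flr α * (qt i + 1) : ℕ) : ℝ) / M)) →
      (∑ aa ∈ Fintype.piFinset (fun i => Finset.Icc (flr α * qt i) (flr α * (qt i + 1))),
          TP (fun i => ((flr α * qt i : ℕ) : ℝ) / M) (flr α) (fun i => (aa i : ℝ) / M) *
            lagQ (d - 1) (flr α) M qt aa x)
        = TP (fun i => ((flr α * qt i : ℕ) : ℝ) / M) (flr α) x) :
    ∀ x : Fin (d - 1) → ℝ,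
      (∀ i, x i ∈ Set.Icc (((flr α * qt i : ℕ) : ℝ) / M)
          (((flr α * (qt i + 1) : ℕ) : ℝ) / M)) →
      |(∑ aa ∈ Fintype.piFinset (fun i => Finset.Icc (flr α * qt i) (flr α * (qt i + 1))),
            gstar (fun i => (aa i : ℝ) / M) * lagQ (d - 1) (flr α) M qt aa x) -
          gstar x|
        ≤ 2 * (⌈α⌉₊ : ℝ) ^ (d * ⌈α⌉₊) * lam * (M : ℝ) ^ (-α) := by
  intro x hx
  set k := flr α with hkdef
  have hceil2 : 2 ≤ ⌈α⌉ := by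
    have : (1:ℤ) < ⌈α⌉ := Int.lt_ceil.mpr (by exact_mod_cast hα)
    omega
  have hk1 : 1 ≤ k := by simp only [hkdef, flr]; omega
  have hceilNat : ⌈α⌉₊ = k + 1 := by
    rw [← Int.ceil_toNat]; simp only [hkdef, flr]; omega
  have hα0 : (0:ℝ) < α := by linarith
  have hαle : α ≤ (k:ℝ) + 1 := by
    have h := Nat.le_ceil α
    rw [hceilNat] at h; push_cast at h; linarith
  have hMpos : 0 < M := by
    rw [hM]; exact Nat.mul_pos (by omega) (Nat.pow_pos (by norm_num))
  have hMR : (0:ℝ) < M := by exact_mod_cast hMpos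
  set y : Fin (d-1) → ℝ := fun i => ((k * qt i : ℕ) : ℝ) / M with hy
  have hub : ∀ i, (k * (qt i + 1) : ℕ) ≤ M := by
    intro i
    rw [hM]
    have h2l : 1 ≤ 2 ^ l := Nat.one_le_two_pow
    have := hqt i
    exact Nat.mul_le_mul_left k (by omega)
  have hcell01 : ∀ z : Fin (d-1) → ℝ,
      (∀ i, z i ∈ Set.Icc (((k * qt i : ℕ) : ℝ) / M) (((k * (qt i + 1) : ℕ) : ℝ) / M)) →
      ∀ i, z i ∈ Set.Icc (0:ℝ) 1 := by
    intro z hz i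
    obtain ⟨h1, h2⟩ := hz i
    constructor
    · have : (0:ℝ) ≤ ((k * qt i : ℕ) : ℝ) / M := by positivity
      linarith
    · have hle : ((k * (qt i + 1) : ℕ) : ℝ) ≤ (M:ℝ) := by exact_mod_cast hub i
      have : ((k * (qt i + 1) : ℕ) : ℝ) / M ≤ (M:ℝ)/M := by gcongr
      rw [div_self (ne_of_gt hMR)] at this
      linarith
  have hycell : ∀ i, y i ∈ Set.Icc (((k * qt i : ℕ) : ℝ) / M) (((k * (qt i + 1) : ℕ) : ℝ) / M) := by
    intro i
    refine ⟨le_refl _, ?_⟩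
    simp only [hy]
    gcongr
    omega
  have hdist : ∀ z : Fin (d-1) → ℝ,
      (∀ i, z i ∈ Set.Icc (((k * qt i : ℕ) : ℝ) / M) (((k * (qt i + 1) : ℕ) : ℝ) / M)) →
      ‖z - y‖ ≤ (k:ℝ)/M := by
    intro z hz
    refine pi_norm_le_iff_of_nonneg (by positivity) |>.mpr fun i => ?_
    obtain ⟨h1, h2⟩ := hz i
    rw [Pi.sub_apply, Real.norm_eq_abs, abs_le]
    push_cast at h1 h2
    simp only [hy]
    push_cast
    have heq : ((k:ℝ)*((qt i:ℝ)+1))/M = ((k:ℝ)*(qt i:ℝ))/M + (k:ℝ)/M := by ring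
    have hkM : (0:ℝ) ≤ (k:ℝ)/M := by positivity
    constructor <;> linarith
  -- Hölder bound on the cell
  have hHold : ∀ z : Fin (d-1) → ℝ,
      (∀ i, z i ∈ Set.Icc (((k * qt i : ℕ) : ℝ) / M) (((k * (qt i + 1) : ℕ) : ℝ) / M)) →
      |gstar z - TP y k z| ≤ lam * ((k:ℝ)/M) ^ α := by
    intro z hz
    have h := hg.2 z y (hcell01 z hz) (hcell01 y hycell) α hα0 le_rfl
    rw [← hkdef] at h
    refine h.trans ?_
    have := Real.rpow_le_rpow (norm_nonneg (z - y)) (hdist z hz) hα0.le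
    exact mul_le_mul_of_nonneg_left this (by linarith)
  -- bound on the Lagrange basis polynomials
  set S := Fintype.piFinset (fun i => Finset.Icc (k * qt i) (k * (qt i + 1))) with hS
  have hQ : ∀ aa ∈ S, |lagQ (d - 1) k M qt aa x| ≤ (k:ℝ) ^ ((d-1)*k) := by
    intro aa ha
    rw [lagQ, Finset.abs_prod]
    calc ∏ i : Fin (d-1), |∏ j ∈ (Finset.range (k + 1)).filter (fun j => j ≠ aa i - k * qt i),
            (x i - ((k * qt i + j : ℕ) : ℝ) / M) / ((aa i : ℝ) / M - ((k * qt i + j : ℕ) : ℝ) / M)|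
        ≤ ∏ i : Fin (d-1), (k:ℝ)^k := by
          refine Finset.prod_le_prod (fun _ _ => abs_nonneg _) (fun i _ => ?_)
          have haa : aa i ∈ Finset.Icc (k * qt i) (k * (qt i + 1)) :=
            Fintype.mem_piFinset.mp ha i
          rw [Finset.mem_Icc] at haa
          have hsplit : k * (qt i + 1) = k * qt i + k := Nat.mul_succ k (qt i)
          have hmem : aa i - k * qt i ∈ Finset.range (k + 1) := by
            rw [Finset.mem_range]; omega
          have hcard : ((Finset.range (k + 1)).filter (fun j => j ≠ aa i - k * qt i)).card = k := by
            rw [Finset.filter_ne', Finset.card_erase_of_mem hmem, Finset.card_range]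
            omega
          rw [Finset.abs_prod]
          calc ∏ j ∈ (Finset.range (k + 1)).filter (fun j => j ≠ aa i - k * qt i),
                |(x i - ((k * qt i + j : ℕ) : ℝ) / M) / ((aa i : ℝ) / M - ((k * qt i + j : ℕ) : ℝ) / M)|
              ≤ ∏ _j ∈ (Finset.range (k + 1)).filter (fun j => j ≠ aa i - k * qt i), (k:ℝ) := by
                refine Finset.prod_le_prod (fun _ _ => abs_nonneg _) (fun j hj => ?_)
                rw [Finset.mem_filter, Finset.mem_range] at hj
                obtain ⟨hjk, hjne⟩ := hj
                -- numerator bound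
                obtain ⟨hx1, hx2⟩ := hx i
                push_cast at hx1 hx2
                have hnum : |x i - ((k * qt i + j : ℕ) : ℝ) / M| ≤ (k:ℝ)/M := by
                  rw [abs_le]
                  push_cast
                  have hjle : (j:ℝ) ≤ (k:ℝ) := by exact_mod_cast Nat.le_of_lt_succ hjk
                  have hj0 : (0:ℝ) ≤ (j:ℝ) := by positivity
                  have e1 : ((k:ℝ)*(qt i:ℝ) + (j:ℝ))/M = ((k:ℝ)*(qt i:ℝ))/M + (j:ℝ)/M := by ring
                  have e2 : ((k:ℝ)*((qt i:ℝ)+1))/M = ((k:ℝ)*(qt i:ℝ))/M + (k:ℝ)/M := by ring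
                  have e3 : (j:ℝ)/M ≤ (k:ℝ)/M := by gcongr
                  have e4 : (0:ℝ) ≤ (j:ℝ)/M := by positivity
                  constructor <;> linarith
                -- denominator bound
                have hne : aa i ≠ k * qt i + j := by omega
                have hden : (1:ℝ)/M ≤ |(aa i : ℝ) / M - ((k * qt i + j : ℕ) : ℝ) / M| := by
                  rw [div_sub_div_same, abs_div, abs_of_pos hMR]
                  gcongr
                  have hneZ : (aa i : ℤ) ≠ ((k * qt i + j : ℕ) : ℤ) := by exact_mod_cast hne
                  have h1 := Int.one_le_abs (sub_ne_zero.mpr hneZ)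
                  calc (1:ℝ) = ((1:ℤ):ℝ) := by norm_num
                    _ ≤ ((|(aa i : ℤ) - ((k * qt i + j : ℕ) : ℤ)| : ℤ) : ℝ) := by exact_mod_cast h1
                    _ = |(aa i : ℝ) - ((k * qt i + j : ℕ) : ℝ)| := by push_cast; ring_nf
                rw [abs_div]
                calc |x i - ((k * qt i + j : ℕ) : ℝ) / M| / |(aa i : ℝ) / M - ((k * qt i + j : ℕ) : ℝ) / M|
                    ≤ ((k:ℝ)/M) / ((1:ℝ)/M) :=
                      div_le_div₀ (by positivity) hnum (by positivity) hden
                  _ = (k:ℝ) := by field_simp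
            _ = (k:ℝ)^k := by rw [Finset.prod_const, hcard]
      _ = (k:ℝ) ^ ((d-1)*k) := by
          rw [Finset.prod_const, Finset.card_univ, Fintype.card_fin, ← pow_mul,
            Nat.mul_comm]
  -- cardinality of the index set
  have hcardS : S.card = (k+1)^(d-1) := by
    rw [hS, Fintype.card_piFinset]
    have hci : ∀ i : Fin (d-1), (Finset.Icc (k * qt i) (k * (qt i + 1))).card = k + 1 := by
      intro i
      rw [Nat.card_Icc, Nat.mul_add]
      omega
    rw [Finset.prod_congr rfl (fun i _ => hci i), Finset.prod_const, Finset.card_univ,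
      Fintype.card_fin]
  -- decomposition
  have hkey : (∑ aa ∈ S, gstar (fun i => (aa i : ℝ) / M) * lagQ (d - 1) k M qt aa x) - gstar x
      = (∑ aa ∈ S, (gstar (fun i => (aa i : ℝ) / M) - TP y k (fun i => (aa i : ℝ) / M)) *
          lagQ (d - 1) k M qt aa x) + (TP y k x - gstar x) := by
    simp only [sub_mul, Finset.sum_sub_distrib]
    rw [hrepro x hx]
    ring
  rw [hkey]
  -- node membership in the cell
  have hnode : ∀ aa ∈ S, ∀ i, ((aa i : ℝ)/M) ∈
      Set.Icc (((k * qt i : ℕ) : ℝ) / M) (((k * (qt i + 1) : ℕ) : ℝ) / M) := by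
    intro aa ha i
    have haa := Fintype.mem_piFinset.mp ha i
    rw [Finset.mem_Icc] at haa
    constructor
    · gcongr
      exact_mod_cast haa.1
    · gcongr
      exact_mod_cast haa.2
  -- main estimate
  have hA : |∑ aa ∈ S, (gstar (fun i => (aa i : ℝ) / M) - TP y k (fun i => (aa i : ℝ) / M)) *
        lagQ (d - 1) k M qt aa x|
      ≤ ((k+1:ℕ)^(d-1) : ℝ) * (lam * ((k:ℝ)/M)^α * (k:ℝ)^((d-1)*k)) := by
    calc |∑ aa ∈ S, (gstar (fun i => (aa i : ℝ) / M) - TP y k (fun i => (aa i : ℝ) / M)) *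
          lagQ (d - 1) k M qt aa x|
        ≤ ∑ aa ∈ S, |(gstar (fun i => (aa i : ℝ) / M) - TP y k (fun i => (aa i : ℝ) / M)) *
          lagQ (d - 1) k M qt aa x| := Finset.abs_sum_le_sum_abs _ _
      _ ≤ ∑ aa ∈ S, lam * ((k:ℝ)/M)^α * (k:ℝ)^((d-1)*k) := by
          refine Finset.sum_le_sum (fun aa ha => ?_)
          rw [abs_mul]
          exact mul_le_mul (hHold _ (hnode aa ha)) (hQ aa ha) (abs_nonneg _)
            (by positivity)
      _ = (S.card : ℝ) * (lam * ((k:ℝ)/M)^α * (k:ℝ)^((d-1)*k)) := by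
          rw [Finset.sum_const, nsmul_eq_mul]
      _ = ((k+1:ℕ)^(d-1) : ℝ) * (lam * ((k:ℝ)/M)^α * (k:ℝ)^((d-1)*k)) := by
          rw [hcardS]; push_cast; ring
  have hB : |TP y k x - gstar x| ≤ lam * ((k:ℝ)/M)^α := by
    rw [abs_sub_comm]; exact hHold x hx
  -- final arithmetic
  rw [hceilNat]
  have hfr : ((k:ℝ)/M)^α = (k:ℝ)^α * (M:ℝ)^(-α) := by
    rw [Real.div_rpow (by positivity) (le_of_lt hMR), Real.rpow_neg (le_of_lt hMR),
      div_eq_mul_inv]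
  have hk1R : (1:ℝ) ≤ (k:ℝ) := by exact_mod_cast hk1
  have hkα : (k:ℝ)^α ≤ ((k:ℝ)+1)^(k+1) := by
    calc (k:ℝ)^α ≤ (k:ℝ)^(((k+1:ℕ):ℝ)) := by
          refine Real.rpow_le_rpow_of_exponent_le hk1R ?_
          push_cast; linarith
      _ = (k:ℝ)^(k+1:ℕ) := Real.rpow_natCast _ _
      _ ≤ ((k:ℝ)+1)^(k+1) := by gcongr <;> linarith
  obtain ⟨m, hdm⟩ : ∃ m, d = m + 1 := ⟨d - 1, by omega⟩
  have hd1 : d - 1 = m := by omega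
  have hcoef : ((k+1:ℕ)^(d-1) : ℝ) * ((k:ℝ)^α * (k:ℝ)^((d-1)*k)) + (k:ℝ)^α
      ≤ 2 * ((k+1:ℕ):ℝ)^(d*(k+1)) := by
    have hb1 : (1:ℝ) ≤ (k:ℝ)+1 := by linarith
    have e1 : (k:ℝ)^((d-1)*k) ≤ ((k:ℝ)+1)^((d-1)*k) := by gcongr; linarith
    have hexp : d*(k+1) = (d-1) + ((k+1) + (d-1)*k) := by
      subst hdm; simp only [Nat.add_sub_cancel]; ring
    calc ((k+1:ℕ)^(d-1) : ℝ) * ((k:ℝ)^α * (k:ℝ)^((d-1)*k)) + (k:ℝ)^α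
        ≤ (((k:ℝ)+1)^(d-1)) * (((k:ℝ)+1)^(k+1) * ((k:ℝ)+1)^((d-1)*k)) + ((k:ℝ)+1)^(k+1) := by
          push_cast
          gcongr
      _ = ((k:ℝ)+1)^(d*(k+1)) + ((k:ℝ)+1)^(k+1) := by
          rw [hexp]; ring
      _ ≤ ((k:ℝ)+1)^(d*(k+1)) + ((k:ℝ)+1)^(d*(k+1)) := by
          gcongr
          · calc k+1 ≤ 1*(k+1) := by omega
              _ ≤ d*(k+1) := Nat.mul_le_mul_right _ (by omega)
      _ = 2 * ((k+1:ℕ):ℝ)^(d*(k+1)) := by push_cast; ring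
  have hlam0 : (0:ℝ) ≤ lam := by linarith
  have hMA0 : (0:ℝ) ≤ (M:ℝ)^(-α) := Real.rpow_nonneg (le_of_lt hMR) _
  calc |∑ aa ∈ S, (gstar (fun i => (aa i : ℝ) / M) - TP y k (fun i => (aa i : ℝ) / M)) *
        lagQ (d - 1) k M qt aa x + (TP y k x - gstar x)|
      ≤ |∑ aa ∈ S, (gstar (fun i => (aa i : ℝ) / M) - TP y k (fun i => (aa i : ℝ) / M)) *
        lagQ (d - 1) k M qt aa x| + |TP y k x - gstar x| := abs_add_le _ _
    _ ≤ ((k+1:ℕ)^(d-1) : ℝ) * (lam * ((k:ℝ)/M)^α * (k:ℝ)^((d-1)*k)) + lam * ((k:ℝ)/M)^α :=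
        add_le_add hA hB
    _ = lam * (M:ℝ)^(-α) * (((k+1:ℕ)^(d-1) : ℝ) * ((k:ℝ)^α * (k:ℝ)^((d-1)*k)) + (k:ℝ)^α) := by
        rw [hfr]; ring
    _ ≤ lam * (M:ℝ)^(-α) * (2 * ((k+1:ℕ):ℝ)^(d*(k+1))) :=
        mul_le_mul_of_nonneg_left hcoef (by positivity)
    _ = 2 * ((k+1:ℕ):ℝ)^(d*(k+1)) * lam * (M:ℝ)^(-α) := by ring
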